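/- arXiv:1803.09050 — 5 statements merged into one kernel-verified Lean document; each statement's English description precedes it below -/
import Mathlib

section
/- For every θ ∈ ℝ^d, every batch B, and every step size α ≥ 0, the reweighted SGD update satisfies the descent inequality G(U(θ, B, α)) ≤ G(θ) − (α/n)·(1 − L·α·σ²/2)·T(θ, B). -/
open scoped RealInnerProductSpace BigOperators

private lemma descent_lemma {F : Type*} [NormedAddCommGroup F] [InnerProductSpace ℝ F] [CompleteSpace F]
    (G : F → ℝ) (hG : Differentiable ℝ G) (L : ℝ) (hL : 0 ≤ L)
    (hGL : ∀ x y, ‖gradient G x - gradient G y‖ ≤ L * ‖x - y‖) (θ v : F) :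
    G (θ + v) ≤ G θ + ⟪gradient G θ, v⟫ + L / 2 * ‖v‖ ^ 2 := by
  set c : ℝ := ⟪gradient G θ, v⟫ with hc
  set φ : ℝ → ℝ := fun t => G (θ + t • v) with hφdef
  have hline : ∀ t : ℝ, HasDerivAt (fun s : ℝ => θ + s • v) v t := by
    intro t
    have := ((hasDerivAt_id t).smul_const v).const_add θ
    simpa using this
  have hφ : ∀ t : ℝ, HasDerivAt φ ⟪gradient G (θ + t • v), v⟫ t := by
    intro t
    have h1 : HasFDerivAt G ((InnerProductSpace.toDual ℝ F) (gradient G (θ + t • v)))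
        (θ + t • v) := (hG _).hasGradientAt.hasFDerivAt
    have := h1.comp_hasDerivAt t (hline t)
    rw [InnerProductSpace.toDual_apply_apply] at this
    exact this
  set χ : ℝ → ℝ := fun t => φ t - (t * c + L / 2 * t ^ 2 * ‖v‖ ^ 2) with hχdef
  have hχ : ∀ t : ℝ, HasDerivAt χ (⟪gradient G (θ + t • v), v⟫ - (c + L * t * ‖v‖ ^ 2)) t := by
    intro t
    have h2 : HasDerivAt (fun t : ℝ => t * c + L / 2 * t ^ 2 * ‖v‖ ^ 2)
        (c + L * t * ‖v‖ ^ 2) t := by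
      have := (((hasDerivAt_id t).mul_const c).add
        (((hasDerivAt_pow 2 t).const_mul (L / 2)).mul_const (‖v‖ ^ 2)))
      refine HasDerivAt.congr_deriv this ?_
      ring
    exact (hφ t).sub h2
  have hanti : AntitoneOn χ (Set.Icc 0 1) := by
    apply antitoneOn_of_deriv_nonpos (convex_Icc 0 1)
    · exact fun t _ => ((hχ t).continuousAt).continuousWithinAt
    · exact fun t _ => ((hχ t).differentiableAt).differentiableWithinAt
    · intro t ht
      rw [interior_Icc] at ht
      rw [(hχ t).deriv]
      have hsub : ⟪gradient G (θ + t • v), v⟫ - c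
          = ⟪gradient G (θ + t • v) - gradient G θ, v⟫ := by
        rw [inner_sub_left]
      have h3 : ⟪gradient G (θ + t • v) - gradient G θ, v⟫ ≤ L * t * ‖v‖ ^ 2 := by
        calc ⟪gradient G (θ + t • v) - gradient G θ, v⟫
            ≤ ‖gradient G (θ + t • v) - gradient G θ‖ * ‖v‖ := real_inner_le_norm _ _
          _ ≤ (L * ‖(θ + t • v) - θ‖) * ‖v‖ := by
              apply mul_le_mul_of_nonneg_right (hGL _ _) (norm_nonneg _)
          _ = L * t * ‖v‖ ^ 2 := by
              rw [add_sub_cancel_left, norm_smul, Real.norm_eq_abs,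
                abs_of_pos ht.1]
              ring
      have h4 : ⟪gradient G (θ + t • v), v⟫ - c ≤ L * t * ‖v‖ ^ 2 := by
        rw [hsub]; exact h3
      linarith
  have h01 : χ 1 ≤ χ 0 :=
    hanti (Set.mem_Icc.mpr ⟨le_refl 0, zero_le_one⟩) (Set.mem_Icc.mpr ⟨zero_le_one, le_refl 1⟩)
      zero_le_one
  simp only [hχdef, hφdef, one_smul, zero_smul, add_zero] at h01
  have : G (θ + v) - (1 * c + L / 2 * 1 ^ 2 * ‖v‖ ^ 2) ≤ G θ - (0 * c + L / 2 * 0 ^ 2 * ‖v‖ ^ 2) := h01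
  linarith

/-- For every θ ∈ ℝ^d, every batch B, and every step size α ≥ 0, the reweighted
SGD update satisfies the descent inequality
`G(U(θ, B, α)) ≤ G(θ) − (α/n)·(1 − L·α·σ²/2)·T(θ, B)`. -/
theorem reweighted_sgd_descent_inequality
    (d N M n : ℕ) (hd : 0 < d) (hN : 0 < N) (hM : 0 < M) (hn : 0 < n) (hMN : M ≤ N)
    (σ L : ℝ) (hσ : 0 < σ) (hL : 0 < L)
    (f : Fin N → EuclideanSpace ℝ (Fin d) → ℝ)
    (hf : ∀ i, ContDiff ℝ 1 (f i))
    (hfb : ∀ i x, ‖gradient (f i) x‖ ≤ σ)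
    (G : EuclideanSpace ℝ (Fin d) → ℝ)
    (hG : ∀ θ, G θ = (1 / (M : ℝ)) * ∑ i : Fin M, f (Fin.castLE hMN i) θ)
    (hGL : ∀ x y, ‖gradient G x - gradient G y‖ ≤ L * ‖x - y‖)
    (U : EuclideanSpace ℝ (Fin d) → (Fin n → Fin N) → ℝ → EuclideanSpace ℝ (Fin d))
    (hU : ∀ θ B α, U θ B α = θ - (α / (n : ℝ)) • ∑ k : Fin n,
        max ⟪gradient G θ, gradient (f (B k)) θ⟫ 0 • gradient (f (B k)) θ)
    (T : EuclideanSpace ℝ (Fin d) → (Fin n → Fin N) → ℝ)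
    (hT : ∀ θ B, T θ B = ∑ k : Fin n, (max ⟪gradient G θ, gradient (f (B k)) θ⟫ 0) ^ 2)
    (θ : EuclideanSpace ℝ (Fin d)) (B : Fin n → Fin N) (α : ℝ) (hα : 0 ≤ α) :
    G (U θ B α) ≤ G θ - (α / (n : ℝ)) * (1 - L * α * σ ^ 2 / 2) * T θ B := by
  have hGdiff : Differentiable ℝ G := by
    have : G = fun θ => (1 / (M : ℝ)) * ∑ i : Fin M, f (Fin.castLE hMN i) θ := funext hG
    rw [this]
    exact Differentiable.const_mul
      (Differentiable.fun_sum fun i _ => ((hf _).differentiable one_ne_zero)) _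
  set w : Fin n → ℝ := fun k => max ⟪gradient G θ, gradient (f (B k)) θ⟫ 0 with hw
  have hwnn : ∀ k, 0 ≤ w k := fun k => le_max_right _ _
  set s : EuclideanSpace ℝ (Fin d) := ∑ k : Fin n, w k • gradient (f (B k)) θ with hs
  set v : EuclideanSpace ℝ (Fin d) := -((α / (n : ℝ)) • s) with hv
  have hUv : U θ B α = θ + v := by rw [hU, hv]; abel
  have hαn : 0 ≤ α / (n : ℝ) := div_nonneg hα (Nat.cast_nonneg n)
  -- inner product identity
  have hinner : ⟪gradient G θ, v⟫ = -((α / (n : ℝ)) * T θ B) := by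
    rw [hv, inner_neg_right, inner_smul_right, hs, inner_sum, hT]
    congr 1
    congr 1
    apply Finset.sum_congr rfl
    intro k _
    rw [real_inner_smul_right]
    rcases le_or_gt ⟪gradient G θ, gradient (f (B k)) θ⟫ 0 with h | h
    · rw [hw]; simp only [max_eq_right h]; ring
    · rw [hw]; simp only [max_eq_left h.le]
      rw [real_inner_comm]; ring
  -- norm bound
  have hT0 : 0 ≤ T θ B := by
    rw [hT]; exact Finset.sum_nonneg fun k _ => sq_nonneg _
  have hnorm : ‖v‖ ^ 2 ≤ (α / (n : ℝ)) ^ 2 * σ ^ 2 * (n : ℝ) * T θ B := by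
    have hns : ‖s‖ ≤ σ * ∑ k : Fin n, w k := by
      calc ‖s‖ ≤ ∑ k : Fin n, ‖w k • gradient (f (B k)) θ‖ := norm_sum_le _ _
        _ ≤ ∑ k : Fin n, w k * σ := by
            apply Finset.sum_le_sum
            intro k _
            rw [norm_smul, Real.norm_eq_abs, abs_of_nonneg (hwnn k)]
            exact mul_le_mul_of_nonneg_left (hfb _ _) (hwnn k)
        _ = σ * ∑ k : Fin n, w k := by
            rw [Finset.mul_sum]
            exact Finset.sum_congr rfl fun k _ => mul_comm _ _
    have hsumsq : (∑ k : Fin n, w k) ^ 2 ≤ (n : ℝ) * T θ B := by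
      rw [hT]
      have := sq_sum_le_card_mul_sum_sq (s := Finset.univ) (f := w)
      simpa [hw] using this
    have hvnorm : ‖v‖ = (α / (n : ℝ)) * ‖s‖ := by
      rw [hv, norm_neg, norm_smul, Real.norm_eq_abs, abs_of_nonneg hαn]
    rw [hvnorm]
    have hsnn : 0 ≤ ‖s‖ := norm_nonneg _
    have hwsum : 0 ≤ ∑ k : Fin n, w k := Finset.sum_nonneg fun k _ => hwnn k
    have h1 : ‖s‖ ^ 2 ≤ σ ^ 2 * (∑ k : Fin n, w k) ^ 2 := by
      have := mul_self_le_mul_self hsnn hns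
      calc ‖s‖ ^ 2 = ‖s‖ * ‖s‖ := sq ‖s‖
        _ ≤ (σ * ∑ k : Fin n, w k) * (σ * ∑ k : Fin n, w k) := this
        _ = σ ^ 2 * (∑ k : Fin n, w k) ^ 2 := by ring
    calc ((α / (n : ℝ)) * ‖s‖) ^ 2 = (α / (n : ℝ)) ^ 2 * ‖s‖ ^ 2 := by ring
      _ ≤ (α / (n : ℝ)) ^ 2 * (σ ^ 2 * ((n : ℝ) * T θ B)) := by
          apply mul_le_mul_of_nonneg_left _ (sq_nonneg _)
          calc ‖s‖ ^ 2 ≤ σ ^ 2 * (∑ k : Fin n, w k) ^ 2 := h1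
            _ ≤ σ ^ 2 * ((n : ℝ) * T θ B) :=
                mul_le_mul_of_nonneg_left hsumsq (sq_nonneg σ)
      _ = (α / (n : ℝ)) ^ 2 * σ ^ 2 * (n : ℝ) * T θ B := by ring
  have hdesc := descent_lemma G hGdiff L hL.le hGL θ v
  rw [hUv]
  have hfinal : L / 2 * ‖v‖ ^ 2 ≤ L / 2 * ((α / (n : ℝ)) ^ 2 * σ ^ 2 * (n : ℝ) * T θ B) :=
    mul_le_mul_of_nonneg_left hnorm (by positivity)
  have hnpos : (0 : ℝ) < (n : ℝ) := by exact_mod_cast hn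
  have hcalc : (α / (n : ℝ)) ^ 2 * (n : ℝ) = α ^ 2 / (n : ℝ) := by
    field_simp
  have : L / 2 * ((α / (n : ℝ)) ^ 2 * σ ^ 2 * (n : ℝ) * T θ B)
      = (α / (n : ℝ)) * (L * α * σ ^ 2 / 2) * T θ B := by
    field_simp
  rw [this] at hfinal
  calc G (θ + v) ≤ G θ + ⟪gradient G θ, v⟫ + L / 2 * ‖v‖ ^ 2 := hdesc
    _ ≤ G θ - (α / (n : ℝ)) * T θ B + (α / (n : ℝ)) * (L * α * σ ^ 2 / 2) * T θ B := by
        rw [hinner]; linarith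
    _ = G θ - (α / (n : ℝ)) * (1 - L * α * σ ^ 2 / 2) * T θ B := by ring
end

section
/- Suppose μ(i ∈ B) > 0 for every index i ∈ {1, …, M}. Then for every θ ∈ ℝ^d, the expectation E_{B∼μ}[T(θ, B)] equals 0 if and only if ∇G(θ) = 0; equivalently, E_{B∼μ}[T(θ, B)] > 0 if and only if ∇G(θ) ≠ 0. -/
open scoped RealInnerProductSpace BigOperators

lemma grad_pair_aux {d : ℕ} (f : EuclideanSpace ℝ (Fin d) → ℝ)
    (x v : EuclideanSpace ℝ (Fin d)) :
    ⟪gradient f x, v⟫ = fderiv ℝ f x v := by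
  rw [gradient, ← InnerProductSpace.toDual_apply_apply, LinearIsometryEquiv.apply_symm_apply]

/-- if `μ(i ∈ B) > 0` for every index `i ∈ {1, …, M}`, then for every `θ`,
`E_{B∼μ}[T(θ, B)] = 0` iff `∇G(θ) = 0`; equivalently, `E_{B∼μ}[T(θ, B)] > 0` iff
`∇G(θ) ≠ 0`. -/
theorem expected_T_eq_zero_iff_grad_eq_zero
    (d N M n : ℕ) (hd : 0 < d) (hN : 0 < N) (hM : 0 < M) (hn : 0 < n) (hMN : M ≤ N)
    (f : Fin N → EuclideanSpace ℝ (Fin d) → ℝ)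
    (hf : ∀ i, ContDiff ℝ 1 (f i))
    (G : EuclideanSpace ℝ (Fin d) → ℝ)
    (hG : ∀ θ, G θ = (1 / (M : ℝ)) * ∑ i : Fin M, f (Fin.castLE hMN i) θ)
    (T : EuclideanSpace ℝ (Fin d) → (Fin n → Fin N) → ℝ)
    (hT : ∀ θ B, T θ B = ∑ k : Fin n, (max ⟪gradient G θ, gradient (f (B k)) θ⟫ 0) ^ 2)
    (μ : (Fin n → Fin N) → ℝ)
    (hμ0 : ∀ B, 0 ≤ μ B) (hμ1 : ∑ B : Fin n → Fin N, μ B = 1)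
    (hμp : ∀ i : Fin M,
      0 < ∑ B ∈ Finset.univ.filter (fun B : Fin n → Fin N => ∃ k, B k = Fin.castLE hMN i), μ B)
    (θ : EuclideanSpace ℝ (Fin d)) :
    ((∑ B : Fin n → Fin N, μ B * T θ B) = 0 ↔ gradient G θ = 0) ∧
      (0 < (∑ B : Fin n → Fin N, μ B * T θ B) ↔ gradient G θ ≠ 0) := by
  set g := gradient G θ with hg
  have hdf : ∀ i, DifferentiableAt ℝ (f i) θ :=
    fun i => ((hf i).differentiable one_ne_zero).differentiableAt
  have hTnn : ∀ B, 0 ≤ T θ B := by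
    intro B
    rw [hT]
    exact Finset.sum_nonneg fun k _ => sq_nonneg _
  have hterm_nn : ∀ B : Fin n → Fin N, 0 ≤ μ B * T θ B :=
    fun B => mul_nonneg (hμ0 B) (hTnn B)
  have hsum_nn : 0 ≤ ∑ B : Fin n → Fin N, μ B * T θ B :=
    Finset.sum_nonneg fun B _ => hterm_nn B
  have hmain : (∑ B : Fin n → Fin N, μ B * T θ B) = 0 ↔ g = 0 := by
    constructor
    · intro hsum
      -- each term is zero
      have hzero : ∀ B : Fin n → Fin N, μ B * T θ B = 0 := by
        have := (Finset.sum_eq_zero_iff_of_nonneg (fun B _ => hterm_nn B)).mp hsum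
        exact fun B => this B (Finset.mem_univ B)
      -- for each i, ⟪g, ∇f_i θ⟫ ≤ 0
      have hle : ∀ i : Fin M, ⟪g, gradient (f (Fin.castLE hMN i)) θ⟫ ≤ 0 := by
        intro i
        obtain ⟨B, hBmem, hBpos⟩ : ∃ B ∈ Finset.univ.filter
            (fun B : Fin n → Fin N => ∃ k, B k = Fin.castLE hMN i), 0 < μ B := by
          by_contra h
          push_neg at h
          have : (∑ B ∈ Finset.univ.filter
              (fun B : Fin n → Fin N => ∃ k, B k = Fin.castLE hMN i), μ B) = 0 :=
            Finset.sum_eq_zero fun B hB => le_antisymm (h B hB) (hμ0 B)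
          exact absurd this (ne_of_gt (hμp i))
        obtain ⟨k, hk⟩ := (Finset.mem_filter.mp hBmem).2
        have hTB : T θ B = 0 := by
          have := hzero B
          rcases mul_eq_zero.mp this with h | h
          · exact absurd h (ne_of_gt hBpos)
          · exact h
        have : (max ⟪g, gradient (f (B k)) θ⟫ 0) ^ 2 = 0 := by
          rw [hT] at hTB
          have := (Finset.sum_eq_zero_iff_of_nonneg
            (fun k _ => sq_nonneg _)).mp hTB k (Finset.mem_univ k)
          exact this
        have hmax : max ⟪g, gradient (f (B k)) θ⟫ 0 = 0 := pow_eq_zero_iff (by norm_num) |>.mp this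
        rw [hk] at hmax
        exact (max_eq_right_iff.mp hmax)
      -- compute ⟪g, g⟫
      have hfd : fderiv ℝ G θ = (1 / (M : ℝ)) •
          ∑ i : Fin M, fderiv ℝ (f (Fin.castLE hMN i)) θ := by
        have hGfun : G = fun x => (1 / (M : ℝ)) * ∑ i : Fin M, f (Fin.castLE hMN i) x :=
          funext hG
        rw [hGfun]
        have hdsum : DifferentiableAt ℝ (fun x => ∑ i : Fin M, f (Fin.castLE hMN i) x) θ :=
          DifferentiableAt.fun_sum fun i _ => hdf _
        rw [fderiv_const_mul hdsum, fderiv_fun_sum (fun i _ => hdf _)]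
      have hgg : ⟪g, g⟫ = (1 / (M : ℝ)) *
          ∑ i : Fin M, ⟪g, gradient (f (Fin.castLE hMN i)) θ⟫ := by
        calc ⟪g, g⟫ = fderiv ℝ G θ g := grad_pair_aux G θ g
          _ = (1 / (M : ℝ)) * ∑ i : Fin M, fderiv ℝ (f (Fin.castLE hMN i)) θ g := by
              rw [hfd]; simp
          _ = (1 / (M : ℝ)) * ∑ i : Fin M, ⟪g, gradient (f (Fin.castLE hMN i)) θ⟫ := by
              congr 1
              refine Finset.sum_congr rfl fun i _ => ?_
              rw [real_inner_comm, grad_pair_aux]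
      have hgg_le : ⟪g, g⟫ ≤ 0 := by
        rw [hgg]
        apply mul_nonpos_of_nonneg_of_nonpos
        · positivity
        · exact Finset.sum_nonpos fun i _ => hle i
      have : ⟪g, g⟫ = 0 := le_antisymm hgg_le real_inner_self_nonneg
      exact inner_self_eq_zero.mp this
    · intro hg0
      apply Finset.sum_eq_zero
      intro B _
      have : T θ B = 0 := by
        rw [hT]
        apply Finset.sum_eq_zero
        intro k _
        rw [← hg, hg0]
        simp
      rw [this, mul_zero]
  refine ⟨hmain, ?_⟩
  constructor
  · intro hpos
    exact fun h0 => absurd (hmain.mpr h0) (ne_of_gt hpos)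
  · intro hne
    rcases lt_or_eq_of_le hsum_nn with h | h
    · exact h
    · exact absurd (hmain.mp h.symm) hne
end

section
/- Suppose p > 0 is such that μ(i ∈ B) ≥ p for every index i ∈ {1, …, M}. Then for every θ ∈ ℝ^d, the expected value of T under a batch drawn from μ is lower bounded by the fourth power of the validation gradient norm: E_{B∼μ}[T(θ, B)] ≥ p · ‖∇G(θ)‖⁴. -/
open scoped RealInnerProductSpace BigOperators

/-- if `μ(i ∈ B) ≥ p > 0` for every index `i ∈ {1, …, M}`, then for every `θ`,
the expected value of `T` under a batch drawn from `μ` is lower bounded by the fourth power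
of the validation gradient norm: `E_{B∼μ}[T(θ, B)] ≥ p · ‖gradient G θ‖⁴`. -/
theorem expected_T_ge_p_grad_pow_four
    (d N M n : ℕ) (hd : 0 < d) (hN : 0 < N) (hM : 0 < M) (hn : 0 < n) (hMN : M ≤ N)
    (f : Fin N → EuclideanSpace ℝ (Fin d) → ℝ)
    (hf : ∀ i, ContDiff ℝ 1 (f i))
    (G : EuclideanSpace ℝ (Fin d) → ℝ)
    (hG : ∀ θ, G θ = (1 / (M : ℝ)) * ∑ i : Fin M, f (Fin.castLE hMN i) θ)
    (T : EuclideanSpace ℝ (Fin d) → (Fin n → Fin N) → ℝ)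
    (hT : ∀ θ B, T θ B = ∑ k : Fin n, (max ⟪gradient G θ, gradient (f (B k)) θ⟫ 0) ^ 2)
    (μ : (Fin n → Fin N) → ℝ)
    (hμ0 : ∀ B, 0 ≤ μ B) (hμ1 : ∑ B : Fin n → Fin N, μ B = 1)
    (p : ℝ) (hp : 0 < p)
    (hμp : ∀ i : Fin M,
      p ≤ ∑ B ∈ Finset.univ.filter (fun B : Fin n → Fin N => ∃ k, B k = Fin.castLE hMN i), μ B)
    (θ : EuclideanSpace ℝ (Fin d)) :
    p * ‖gradient G θ‖ ^ 4 ≤ ∑ B : Fin n → Fin N, μ B * T θ B := by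
  set g := gradient G θ with hg
  -- gradient of G as an average of the gradients of the f i
  have hgrad : HasGradientAt G ((M : ℝ)⁻¹ • ∑ i : Fin M, gradient (f (Fin.castLE hMN i)) θ) θ := by
    rw [hasGradientAt_iff_hasFDerivAt]
    have hfd : ∀ i : Fin M, HasFDerivAt (f (Fin.castLE hMN i))
        ((InnerProductSpace.toDual ℝ _) (gradient (f (Fin.castLE hMN i)) θ)) θ := by
      intro i
      exact (((hf _).differentiable one_ne_zero θ).hasGradientAt).hasFDerivAt
    have hsum : HasFDerivAt (fun x => ∑ i : Fin M, f (Fin.castLE hMN i) x)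
        (∑ i : Fin M, (InnerProductSpace.toDual ℝ _) (gradient (f (Fin.castLE hMN i)) θ)) θ :=
      HasFDerivAt.fun_sum (fun i _ => hfd i)
    have h2 : HasFDerivAt G
        ((M : ℝ)⁻¹ • ∑ i : Fin M, (InnerProductSpace.toDual ℝ _)
          (gradient (f (Fin.castLE hMN i)) θ)) θ := by
      have := hsum.const_smul ((M : ℝ)⁻¹)
      refine this.congr_of_eventuallyEq ?_
      filter_upwards with x
      simp [hG, smul_eq_mul, one_div]
    rw [map_smul, map_sum]
    exact h2
  have hgeq : g = (M : ℝ)⁻¹ • ∑ i : Fin M, gradient (f (Fin.castLE hMN i)) θ := hgrad.gradient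
  have hMpos : (0 : ℝ) < (M : ℝ) := Nat.cast_pos.mpr hM
  -- ‖g‖² = (1/M) ∑ ⟪g, ∇f_i⟫
  have hnorm : (M : ℝ) * ‖g‖ ^ 2 = ∑ i : Fin M, ⟪g, gradient (f (Fin.castLE hMN i)) θ⟫ := by
    have h1 : ⟪g, g⟫ = (M : ℝ)⁻¹ * ∑ i : Fin M, ⟪g, gradient (f (Fin.castLE hMN i)) θ⟫ := by
      nth_rewrite 2 [hgeq]
      rw [inner_smul_right, inner_sum]
    rw [← real_inner_self_eq_norm_sq, h1, ← mul_assoc, mul_inv_cancel₀ hMpos.ne', one_mul]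
  -- pigeonhole: some i has max term ≥ ‖g‖²
  have hexists : ∃ i : Fin M, ‖g‖ ^ 2 ≤ max ⟪g, gradient (f (Fin.castLE hMN i)) θ⟫ 0 := by
    by_contra h
    push_neg at h
    have hlt : ∑ i : Fin M, max ⟪g, gradient (f (Fin.castLE hMN i)) θ⟫ 0
        < ∑ _i : Fin M, ‖g‖ ^ 2 := by
      apply Finset.sum_lt_sum_of_nonempty
      · exact Finset.univ_nonempty_iff.mpr (Fin.pos_iff_nonempty.mp hM)
      · exact fun i _ => h i
    rw [Finset.sum_const, Finset.card_univ, Fintype.card_fin, nsmul_eq_mul] at hlt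
    have hle : (M : ℝ) * ‖g‖ ^ 2 ≤ ∑ i : Fin M, max ⟪g, gradient (f (Fin.castLE hMN i)) θ⟫ 0 := by
      rw [hnorm]
      exact Finset.sum_le_sum fun i _ => le_max_left _ _
    linarith
  obtain ⟨i, hi⟩ := hexists
  set m := max ⟪g, gradient (f (Fin.castLE hMN i)) θ⟫ 0 with hm
  have hm0 : 0 ≤ m := le_max_right _ _
  -- T θ B ≥ m² whenever i ∈ B
  have hTB : ∀ B : Fin n → Fin N, (∃ k, B k = Fin.castLE hMN i) → m ^ 2 ≤ T θ B := by
    rintro B ⟨k, hk⟩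
    rw [hT]
    have : m ^ 2 = (max ⟪g, gradient (f (B k)) θ⟫ 0) ^ 2 := by rw [hk]
    rw [this]
    exact Finset.single_le_sum (f := fun j => (max ⟪g, gradient (f (B j)) θ⟫ 0) ^ 2)
      (fun j _ => sq_nonneg _) (Finset.mem_univ k)
  set S := Finset.univ.filter (fun B : Fin n → Fin N => ∃ k, B k = Fin.castLE hMN i) with hS
  have step1 : p * ‖g‖ ^ 4 ≤ p * m ^ 2 := by
    have h4 : ‖g‖ ^ 4 = (‖g‖ ^ 2) ^ 2 := by ring
    rw [h4]
    exact mul_le_mul_of_nonneg_left (pow_le_pow_left₀ (sq_nonneg _) hi 2) hp.le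
  have step2 : p * m ^ 2 ≤ (∑ B ∈ S, μ B) * m ^ 2 :=
    mul_le_mul_of_nonneg_right (hμp i) (sq_nonneg m)
  have step3 : (∑ B ∈ S, μ B) * m ^ 2 ≤ ∑ B ∈ S, μ B * T θ B := by
    rw [Finset.sum_mul]
    apply Finset.sum_le_sum
    intro B hB
    have hBmem : ∃ k, B k = Fin.castLE hMN i := (Finset.mem_filter.mp hB).2
    exact mul_le_mul_of_nonneg_left (hTB B hBmem) (hμ0 B)
  have step4 : ∑ B ∈ S, μ B * T θ B ≤ ∑ B : Fin n → Fin N, μ B * T θ B := by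
    apply Finset.sum_le_sum_of_subset_of_nonneg (Finset.filter_subset _ _)
    intro B _ _
    have hT0 : 0 ≤ T θ B := by
      rw [hT]; exact Finset.sum_nonneg fun k _ => sq_nonneg _
    exact mul_nonneg (hμ0 B) hT0
  linarith
end

section
/- Let θ be a random vector in ℝ^d defined on a probability space, and let B be a batch drawn from μ independently of θ, where μ(i ∈ B) ≥ p > 0 for every index i ∈ {1, …, M}. Then M · E[T(θ, B)] ≥ (p/M) · ( ∑_{i=1}^M E[max{⟨∇G(θ), ∇f_i(θ)⟩, 0}] )², where all expectations are assumed finite. -/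
open scoped RealInnerProductSpace BigOperators
open MeasureTheory

private lemma jensen_sq {Ω : Type*} [MeasurableSpace Ω] (ℙ : Measure Ω)
    [IsProbabilityMeasure ℙ]
    (g : Ω → ℝ) (hg : Integrable g ℙ) (hg2 : Integrable (fun ω => g ω ^ 2) ℙ) :
    (∫ ω, g ω ∂ℙ) ^ 2 ≤ ∫ ω, g ω ^ 2 ∂ℙ := by
  have hm : MemLp g 2 ℙ :=
    (memLp_two_iff_integrable_sq hg.aestronglyMeasurable).2 (by simpa [sq] using hg2)
  have h := ProbabilityTheory.variance_nonneg g ℙ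
  rw [ProbabilityTheory.variance_eq_sub hm] at h
  have : (∫ ω, g ω ∂ℙ) ^ 2 ≤ ∫ ω, (g ^ 2) ω ∂ℙ := by linarith
  simpa using this

private lemma batch_sum_le {N M n : ℕ} (hMN : M ≤ N) (h : Fin N → ℝ) (hh : ∀ j, 0 ≤ h j)
    (B : Fin n → Fin N) :
    ∑ i ∈ Finset.univ.filter (fun i : Fin M => ∃ k, B k = Fin.castLE hMN i),
        h (Fin.castLE hMN i) ≤ ∑ k : Fin n, h (B k) := by
  have hinj : Function.Injective (Fin.castLE hMN) := Fin.castLE_injective hMN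
  rw [← Finset.sum_image (f := h) (g := Fin.castLE hMN) (fun x _ y _ hxy => hinj hxy)]
  have hsub : (Finset.univ.filter (fun i : Fin M => ∃ k, B k = Fin.castLE hMN i)).image
      (Fin.castLE hMN) ⊆ Finset.univ.image B := by
    intro j hj
    simp only [Finset.mem_image, Finset.mem_filter, Finset.mem_univ, true_and] at hj ⊢
    obtain ⟨i, ⟨k, hk⟩, rfl⟩ := hj
    exact ⟨k, hk⟩
  refine le_trans (Finset.sum_le_sum_of_subset_of_nonneg hsub fun j _ _ => hh j) ?_
  rw [Finset.sum_comp h B]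
  refine Finset.sum_le_sum fun j hj => ?_
  have hcard : 1 ≤ (Finset.univ.filter fun k => B k = j).card := by
    simp only [Finset.mem_image, Finset.mem_univ, true_and] at hj
    obtain ⟨k, hk⟩ := hj
    exact Finset.card_pos.2 ⟨k, by simp [hk]⟩
  calc h j = 1 * h j := (one_mul _).symm
    _ ≤ (Finset.univ.filter fun k => B k = j).card • h j := by
        rw [nsmul_eq_mul]
        exact mul_le_mul_of_nonneg_right (by exact_mod_cast hcard) (hh j)

/-- let `θ` be a random vector in ℝ^d and let `B` be a batch drawn from `μ`
independently of `θ`, where `μ(i ∈ B) ≥ p > 0` for every index `i ∈ {1, …, M}`. Then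
`M · E[T(θ, B)] ≥ (p/M) · (∑_{i=1}^M E[max{⟨∇G(θ), ∇f_i(θ)⟩, 0}])²`, where all expectations
are assumed finite. (Independence is expressed by computing the joint expectation as the
`μ`-average of the expectations over `θ`.) -/
theorem M_mul_expected_T_ge_cauchy_schwarz_bound
    (d N M n : ℕ) (hd : 0 < d) (hN : 0 < N) (hM : 0 < M) (hn : 0 < n) (hMN : M ≤ N)
    (f : Fin N → EuclideanSpace ℝ (Fin d) → ℝ)
    (hf : ∀ i, ContDiff ℝ 1 (f i))
    (G : EuclideanSpace ℝ (Fin d) → ℝ)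
    (hG : ∀ θ, G θ = (1 / (M : ℝ)) * ∑ i : Fin M, f (Fin.castLE hMN i) θ)
    (T : EuclideanSpace ℝ (Fin d) → (Fin n → Fin N) → ℝ)
    (hT : ∀ θ B, T θ B = ∑ k : Fin n, (max ⟪gradient G θ, gradient (f (B k)) θ⟫ 0) ^ 2)
    (μ : (Fin n → Fin N) → ℝ)
    (hμ0 : ∀ B, 0 ≤ μ B) (hμ1 : ∑ B : Fin n → Fin N, μ B = 1)
    (p : ℝ) (hp : 0 < p)
    (hμp : ∀ i : Fin M,
      p ≤ ∑ B ∈ Finset.univ.filter (fun B : Fin n → Fin N => ∃ k, B k = Fin.castLE hMN i), μ B)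
    (Ω : Type*) [MeasurableSpace Ω] (ℙ : Measure Ω) [IsProbabilityMeasure ℙ]
    (θ : Ω → EuclideanSpace ℝ (Fin d)) (hθ : Measurable θ)
    (hint : ∀ B : Fin n → Fin N, Integrable (fun ω => T (θ ω) B) ℙ)
    (hint' : ∀ i : Fin M, Integrable
      (fun ω => max ⟪gradient G (θ ω), gradient (f (Fin.castLE hMN i)) (θ ω)⟫ 0) ℙ) :
    (p / (M : ℝ)) *
        (∑ i : Fin M,
          ∫ ω, max ⟪gradient G (θ ω), gradient (f (Fin.castLE hMN i)) (θ ω)⟫ 0 ∂ℙ) ^ 2 ≤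
      (M : ℝ) * ∑ B : Fin n → Fin N, μ B * ∫ ω, T (θ ω) B ∂ℙ := by
  classical
  set g : Fin N → Ω → ℝ :=
    fun j ω => max ⟪gradient G (θ ω), gradient (f j) (θ ω)⟫ 0 with hg_def
  set h : Fin N → Ω → ℝ := fun j ω => g j ω ^ 2 with hh_def
  have hgnn : ∀ j ω, 0 ≤ g j ω := fun j ω => le_max_right _ _
  have hhnn : ∀ j ω, 0 ≤ h j ω := fun j ω => sq_nonneg _
  have hn' : (n : ℝ) ≠ 0 := Nat.cast_ne_zero.2 hn.ne'
  have hM' : (M : ℝ) ≠ 0 := Nat.cast_ne_zero.2 hM.ne'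
  -- integrability of h i for i in the range of castLE
  have int_h : ∀ i : Fin M, Integrable (fun ω => h (Fin.castLE hMN i) ω) ℙ := by
    intro i
    have h1 : Integrable (fun ω => (n : ℝ) * h (Fin.castLE hMN i) ω) ℙ := by
      simpa [hT, Finset.sum_const, nsmul_eq_mul, -inner_gradient_left, -inner_gradient_right] using hint (fun _ => Fin.castLE hMN i)
    have h2 := h1.const_mul ((n : ℝ)⁻¹)
    simpa [← mul_assoc, inv_mul_cancel₀ hn'] using h2
  -- pointwise key inequality
  have key : ∀ ω, p * ∑ i : Fin M, h (Fin.castLE hMN i) ω ≤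
      ∑ B : Fin n → Fin N, μ B * T (θ ω) B := by
    intro ω
    have step1 : p * ∑ i : Fin M, h (Fin.castLE hMN i) ω ≤
        ∑ i : Fin M,
          (∑ B ∈ Finset.univ.filter (fun B : Fin n → Fin N => ∃ k, B k = Fin.castLE hMN i),
            μ B) * h (Fin.castLE hMN i) ω := by
      rw [Finset.mul_sum]
      exact Finset.sum_le_sum fun i _ =>
        mul_le_mul_of_nonneg_right (hμp i) (hhnn _ ω)
    refine step1.trans ?_
    have swap : ∑ i : Fin M,
        (∑ B ∈ Finset.univ.filter (fun B : Fin n → Fin N => ∃ k, B k = Fin.castLE hMN i),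
          μ B) * h (Fin.castLE hMN i) ω =
        ∑ B : Fin n → Fin N, μ B *
          ∑ i ∈ Finset.univ.filter (fun i : Fin M => ∃ k, B k = Fin.castLE hMN i),
            h (Fin.castLE hMN i) ω := by
      simp_rw [Finset.sum_mul, Finset.mul_sum, Finset.sum_filter]
      rw [Finset.sum_comm]
    rw [swap]
    refine Finset.sum_le_sum fun B _ => mul_le_mul_of_nonneg_left ?_ (hμ0 B)
    rw [hT]
    exact batch_sum_le hMN (fun j => h j ω) (fun j => hhnn j ω) B
  -- integrated key inequality
  have main : p * ∑ i : Fin M, ∫ ω, h (Fin.castLE hMN i) ω ∂ℙ ≤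
      ∑ B : Fin n → Fin N, μ B * ∫ ω, T (θ ω) B ∂ℙ := by
    have hL : Integrable (fun ω => p * ∑ i : Fin M, h (Fin.castLE hMN i) ω) ℙ :=
      (integrable_finset_sum _ fun i _ => int_h i).const_mul p
    have hR : Integrable (fun ω => ∑ B : Fin n → Fin N, μ B * T (θ ω) B) ℙ :=
      integrable_finset_sum _ fun B _ => (hint B).const_mul (μ B)
    have H := integral_mono hL hR (key ·)
    rw [integral_finset_sum _ fun B _ => (hint B).const_mul (μ B),
      MeasureTheory.integral_const_mul,
      integral_finset_sum _ fun i _ => int_h i] at H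
    simp_rw [MeasureTheory.integral_const_mul] at H
    exact H
  have main' : p * ∑ i : Fin M, ∫ ω, h (Fin.castLE hMN i) ω ∂ℙ ≤
      ∑ B : Fin n → Fin N, μ B * ∫ ω, T (θ ω) B ∂ℙ := main
  -- Cauchy-Schwarz and Jensen
  have cs : (∑ i : Fin M, ∫ ω, g (Fin.castLE hMN i) ω ∂ℙ) ^ 2 ≤
      (M : ℝ) * ∑ i : Fin M, (∫ ω, g (Fin.castLE hMN i) ω ∂ℙ) ^ 2 := by
    have := sq_sum_le_card_mul_sum_sq
      (s := (Finset.univ : Finset (Fin M)))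
      (f := fun i => ∫ ω, g (Fin.castLE hMN i) ω ∂ℙ)
    simpa using this
  have jens : ∀ i : Fin M, (∫ ω, g (Fin.castLE hMN i) ω ∂ℙ) ^ 2 ≤
      ∫ ω, h (Fin.castLE hMN i) ω ∂ℙ :=
    fun i => jensen_sq ℙ _ (hint' i) (int_h i)
  have sum_jens : ∑ i : Fin M, (∫ ω, g (Fin.castLE hMN i) ω ∂ℙ) ^ 2 ≤
      ∑ i : Fin M, ∫ ω, h (Fin.castLE hMN i) ω ∂ℙ :=
    Finset.sum_le_sum fun i _ => jens i
  -- RHS sum is nonnegative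
  have hS : 0 ≤ ∑ B : Fin n → Fin N, μ B * ∫ ω, T (θ ω) B ∂ℙ :=
    Finset.sum_nonneg fun B _ => mul_nonneg (hμ0 B)
      (integral_nonneg fun ω => by rw [hT]; exact Finset.sum_nonneg fun k _ => sq_nonneg _)
  have hM1 : (1 : ℝ) ≤ (M : ℝ) := by exact_mod_cast hM
  calc (p / (M : ℝ)) * (∑ i : Fin M, ∫ ω, g (Fin.castLE hMN i) ω ∂ℙ) ^ 2
      ≤ (p / (M : ℝ)) * ((M : ℝ) * ∑ i : Fin M, (∫ ω, g (Fin.castLE hMN i) ω ∂ℙ) ^ 2) :=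
        mul_le_mul_of_nonneg_left cs (div_nonneg hp.le (Nat.cast_nonneg M))
    _ = p * ∑ i : Fin M, (∫ ω, g (Fin.castLE hMN i) ω ∂ℙ) ^ 2 := by
        field_simp
    _ ≤ p * ∑ i : Fin M, ∫ ω, h (Fin.castLE hMN i) ω ∂ℙ :=
        mul_le_mul_of_nonneg_left sum_jens hp.le
    _ ≤ ∑ B : Fin n → Fin N, μ B * ∫ ω, T (θ ω) B ∂ℙ := main'
    _ ≤ (M : ℝ) * ∑ B : Fin n → Fin N, μ B * ∫ ω, T (θ ω) B ∂ℙ := by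
        nlinarith [hS, hM1]
end

section
/- Suppose the step size satisfies 0 < α < 2/(L·σ²), set κ = (α/n)·(1 − L·α·σ²/2), and suppose p > 0 is such that μ(i ∈ B) ≥ p for every index i ∈ {1, …, M}. Then the expected single-step decrease of the validation loss satisfies, for every θ ∈ ℝ^d, E_{B∼μ}[G(U(θ, B, α))] ≤ G(θ) − κ·p·‖∇G(θ)‖⁴. -/
open scoped RealInnerProductSpace BigOperators

lemma my_descent_lemma {E : Type*} [NormedAddCommGroup E] [InnerProductSpace ℝ E]
    [CompleteSpace E]
    (G : E → ℝ) (hdiff : ∀ x, HasGradientAt G (gradient G x) x)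
    (L : ℝ) (hGL : ∀ x y, ‖gradient G x - gradient G y‖ ≤ L * ‖x - y‖)
    (x v : E) : G (x + v) ≤ G x + ⟪gradient G x, v⟫ + L / 2 * ‖v‖ ^ 2 := by
  have hline : ∀ t : ℝ, HasDerivAt (fun t : ℝ => x + t • v) v t := by
    intro t
    simpa using ((hasDerivAt_id t).smul_const v).const_add x
  have hφ : ∀ t : ℝ, HasDerivAt (fun t : ℝ => G (x + t • v))
      ⟪gradient G (x + t • v), v⟫ t := by
    intro t
    have h1 : HasFDerivAt G (InnerProductSpace.toDual ℝ E (gradient G (x + t • v)))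
        (x + t • v) := hasGradientAt_iff_hasFDerivAt.mp (hdiff _)
    have h2 := h1.comp_hasDerivAt t (hline t)
    simpa [InnerProductSpace.toDual_apply_apply, Function.comp_def] using h2
  have hlinec : Continuous fun t : ℝ => x + t • v :=
    continuous_const.add (continuous_id.smul continuous_const)
  have hcontg : Continuous fun t : ℝ => gradient G (x + t • v) := by
    have hlip : LipschitzWith (Real.toNNReal L) (fun y => gradient G y) := by
      apply LipschitzWith.of_dist_le_mul
      intro a b
      simp only [dist_eq_norm]
      refine le_trans (hGL a b) ?_
      exact mul_le_mul_of_nonneg_right (Real.le_coe_toNNReal L) (norm_nonneg _)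
    exact hlip.continuous.comp hlinec
  have hcontψ : Continuous fun t : ℝ => ⟪gradient G (x + t • v), v⟫ :=
    hcontg.inner continuous_const
  have key : G (x + v) - G x = ∫ t in (0:ℝ)..1, ⟪gradient G (x + t • v), v⟫ := by
    have := intervalIntegral.integral_eq_sub_of_hasDerivAt
      (fun t _ => hφ t) (hcontψ.intervalIntegrable 0 1)
    simpa using this.symm
  have hc2 : Continuous fun t : ℝ => ⟪gradient G x, v⟫ + L * ‖v‖ ^ 2 * t :=
    continuous_const.add (continuous_const.mul continuous_id)
  have bound : (∫ t in (0:ℝ)..1, ⟪gradient G (x + t • v), v⟫)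
      ≤ ∫ t in (0:ℝ)..1, (⟪gradient G x, v⟫ + L * ‖v‖ ^ 2 * t) := by
    apply intervalIntegral.integral_mono_on (by norm_num)
      (hcontψ.intervalIntegrable 0 1) (hc2.intervalIntegrable 0 1)
    intro t ht
    have h3 : ⟪gradient G (x + t • v), v⟫ - ⟪gradient G x, v⟫
        = ⟪gradient G (x + t • v) - gradient G x, v⟫ := by rw [inner_sub_left]
    have h4 : ⟪gradient G (x + t • v) - gradient G x, v⟫
        ≤ ‖gradient G (x + t • v) - gradient G x‖ * ‖v‖ := real_inner_le_norm _ _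
    have h5 : ‖gradient G (x + t • v) - gradient G x‖ ≤ L * ‖t • v‖ := by
      simpa using hGL (x + t • v) x
    have h6 : ‖t • v‖ = t * ‖v‖ := by
      rw [norm_smul, Real.norm_eq_abs, abs_of_nonneg ht.1]
    rw [h6] at h5
    nlinarith [mul_le_mul_of_nonneg_right h5 (norm_nonneg v)]
  have calcint : (∫ t in (0:ℝ)..1, (⟪gradient G x, v⟫ + L * ‖v‖ ^ 2 * t))
      = ⟪gradient G x, v⟫ + L / 2 * ‖v‖ ^ 2 := by
    have i1 : IntervalIntegrable (fun _ : ℝ => (⟪gradient G x, v⟫ : ℝ))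
        MeasureTheory.volume 0 1 := intervalIntegrable_const
    have i2 : IntervalIntegrable (fun t : ℝ => L * ‖v‖ ^ 2 * t)
        MeasureTheory.volume 0 1 := by
      apply Continuous.intervalIntegrable; fun_prop
    rw [intervalIntegral.integral_add i1 i2, intervalIntegral.integral_const_mul,
      integral_id]
    simp
    ring
  rw [calcint] at bound
  linarith [key, bound]

/-- if `0 < α < 2/(L·σ²)`, `κ = (α/n)·(1 − L·α·σ²/2)`, and `μ(i ∈ B) ≥ p > 0`
for every index `i ∈ {1, …, M}`, then the expected single-step decrease of the validation
loss satisfies, for every `θ`, `E_{B∼μ}[G(U(θ, B, α))] ≤ G(θ) − κ·p·‖∇G(θ)‖⁴`. -/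
theorem expected_descent_with_grad_pow_four
    (d N M n : ℕ) (hd : 0 < d) (hN : 0 < N) (hM : 0 < M) (hn : 0 < n) (hMN : M ≤ N)
    (σ L : ℝ) (hσ : 0 < σ) (hL : 0 < L)
    (f : Fin N → EuclideanSpace ℝ (Fin d) → ℝ)
    (hf : ∀ i, ContDiff ℝ 1 (f i))
    (hfb : ∀ i x, ‖gradient (f i) x‖ ≤ σ)
    (G : EuclideanSpace ℝ (Fin d) → ℝ)
    (hG : ∀ θ, G θ = (1 / (M : ℝ)) * ∑ i : Fin M, f (Fin.castLE hMN i) θ)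
    (hGL : ∀ x y, ‖gradient G x - gradient G y‖ ≤ L * ‖x - y‖)
    (U : EuclideanSpace ℝ (Fin d) → (Fin n → Fin N) → ℝ → EuclideanSpace ℝ (Fin d))
    (hU : ∀ θ B α, U θ B α = θ - (α / (n : ℝ)) • ∑ k : Fin n,
        max ⟪gradient G θ, gradient (f (B k)) θ⟫ 0 • gradient (f (B k)) θ)
    (μ : (Fin n → Fin N) → ℝ)
    (hμ0 : ∀ B, 0 ≤ μ B) (hμ1 : ∑ B : Fin n → Fin N, μ B = 1)
    (α : ℝ) (hα : 0 < α) (hα' : α < 2 / (L * σ ^ 2))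
    (κ : ℝ) (hκ : κ = (α / (n : ℝ)) * (1 - L * α * σ ^ 2 / 2))
    (p : ℝ) (hp : 0 < p)
    (hμp : ∀ i : Fin M,
      p ≤ ∑ B ∈ Finset.univ.filter (fun B : Fin n → Fin N => ∃ k, B k = Fin.castLE hMN i), μ B)
    (θ : EuclideanSpace ℝ (Fin d)) :
    (∑ B : Fin n → Fin N, μ B * G (U θ B α)) ≤ G θ - κ * p * ‖gradient G θ‖ ^ 4 := by
  classical
  have hGfun : G = fun x => (1 / (M : ℝ)) * ∑ i : Fin M, f (Fin.castLE hMN i) x := funext hG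
  have hgradG : ∀ x : EuclideanSpace ℝ (Fin d), HasGradientAt G
      ((1 / (M : ℝ)) • ∑ i : Fin M, gradient (f (Fin.castLE hMN i)) x) x := by
    intro x
    rw [hasGradientAt_iff_hasFDerivAt]
    have hsum : HasFDerivAt (fun y : EuclideanSpace ℝ (Fin d) =>
        ∑ i : Fin M, f (Fin.castLE hMN i) y)
        (∑ i : Fin M, (InnerProductSpace.toDual ℝ _
          (gradient (f (Fin.castLE hMN i)) x))) x := by
      apply HasFDerivAt.fun_sum
      intro i _
      exact hasGradientAt_iff_hasFDerivAt.mp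
        (((hf _).differentiable one_ne_zero).differentiableAt.hasGradientAt)
    have h2 := hsum.const_mul (1 / (M : ℝ))
    rw [hGfun]
    simpa [map_smul, map_sum] using h2
  have hgrad_eq : ∀ x, gradient G x
      = (1 / (M : ℝ)) • ∑ i : Fin M, gradient (f (Fin.castLE hMN i)) x :=
    fun x => (hgradG x).gradient
  have hdiff : ∀ x, HasGradientAt G (gradient G x) x := fun x => by
    rw [hgrad_eq]; exact hgradG x
  set g : EuclideanSpace ℝ (Fin d) := gradient G θ with hg
  set c : Fin N → ℝ := fun j => max ⟪g, gradient (f j) θ⟫ 0 with hc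
  have hc_nonneg : ∀ j, 0 ≤ c j := fun j => le_max_right _ _
  have hc_sq : ∀ j, c j * ⟪g, gradient (f j) θ⟫ = (c j) ^ 2 := by
    intro j
    rcases le_or_gt ⟪g, gradient (f j) θ⟫ 0 with h | h
    · rw [show c j = 0 from max_eq_right h]; ring
    · rw [show c j = ⟪g, gradient (f j) θ⟫ from max_eq_left h.le]; ring
  have hc_le : ∀ j, c j ≤ σ * ‖g‖ := by
    intro j
    apply max_le _ (by positivity)
    calc ⟪g, gradient (f j) θ⟫ ≤ ‖g‖ * ‖gradient (f j) θ‖ := real_inner_le_norm _ _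
      _ ≤ ‖g‖ * σ := mul_le_mul_of_nonneg_left (hfb j θ) (norm_nonneg _)
      _ = σ * ‖g‖ := mul_comm _ _
  have hM' : (M : ℝ) ≠ 0 := Nat.cast_ne_zero.mpr hM.ne'
  have hsum_inner : ∑ i : Fin M, ⟪g, gradient (f (Fin.castLE hMN i)) θ⟫
      = (M : ℝ) * ‖g‖ ^ 2 := by
    have h1 : ⟪g, g⟫
        = (1 / (M : ℝ)) * ∑ i : Fin M, ⟪g, gradient (f (Fin.castLE hMN i)) θ⟫ := by
      calc ⟪g, g⟫ = ⟪g, (1 / (M : ℝ)) • ∑ i : Fin M, gradient (f (Fin.castLE hMN i)) θ⟫ := by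
            rw [← hgrad_eq θ, ← hg]
        _ = _ := by rw [inner_smul_right, inner_sum]
    rw [real_inner_self_eq_norm_sq] at h1
    rw [show ∑ i : Fin M, ⟪g, gradient (f (Fin.castLE hMN i)) θ⟫
      = (M : ℝ) * ((1 / (M : ℝ)) * ∑ i : Fin M, ⟪g, gradient (f (Fin.castLE hMN i)) θ⟫) by
        field_simp, ← h1]
  have hex : ∃ i : Fin M, ‖g‖ ^ 2 ≤ ⟪g, gradient (f (Fin.castLE hMN i)) θ⟫ := by
    have hsum' : ∑ _i : Fin M, ‖g‖ ^ 2
        ≤ ∑ i : Fin M, ⟪g, gradient (f (Fin.castLE hMN i)) θ⟫ := by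
      rw [hsum_inner, Finset.sum_const]
      simp [nsmul_eq_mul]
    obtain ⟨i, _, hi⟩ := Finset.exists_le_of_sum_le ⟨⟨0, hM⟩, Finset.mem_univ _⟩ hsum'
    exact ⟨i, hi⟩
  have hLσ : 0 < L * σ ^ 2 := by positivity
  have hαLσ : α * (L * σ ^ 2) < 2 := (lt_div_iff₀ hLσ).mp hα'
  have hn' : (0 : ℝ) < (n : ℝ) := Nat.cast_pos.mpr hn
  have hκpos : 0 < κ := by
    rw [hκ]
    apply mul_pos (div_pos hα hn')
    nlinarith
  -- per-batch bound
  have hstep : ∀ B : Fin n → Fin N,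
      G (U θ B α) ≤ G θ - κ * ∑ k : Fin n, (c (B k)) ^ 2 := by
    intro B
    set v : EuclideanSpace ℝ (Fin d) :=
      -((α / (n : ℝ)) • ∑ k : Fin n, c (B k) • gradient (f (B k)) θ) with hv
    have hU' : U θ B α = θ + v := by
      rw [hU θ B α, sub_eq_add_neg]
    have hdesc := my_descent_lemma G hdiff L hGL θ v
    rw [← hU'] at hdesc
    have hinner : ⟪g, v⟫ = -((α / (n : ℝ)) * ∑ k : Fin n, (c (B k)) ^ 2) := by
      rw [hv, inner_neg_right, inner_smul_right, inner_sum]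
      congr 2
      refine Finset.sum_congr rfl fun k _ => ?_
      rw [real_inner_smul_right, hc_sq]
    have hS_nonneg : 0 ≤ ∑ k : Fin n, (c (B k)) ^ 2 :=
      Finset.sum_nonneg fun k _ => sq_nonneg _
    have hnormv : ‖v‖ ≤ (α / (n : ℝ)) * σ * (∑ k : Fin n, c (B k)) := by
      rw [hv, norm_neg, norm_smul, Real.norm_eq_abs,
        abs_of_nonneg (le_of_lt (div_pos hα hn'))]
      rw [mul_assoc]
      apply mul_le_mul_of_nonneg_left _ (le_of_lt (div_pos hα hn'))
      calc ‖∑ k : Fin n, c (B k) • gradient (f (B k)) θ‖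
          ≤ ∑ k : Fin n, ‖c (B k) • gradient (f (B k)) θ‖ := norm_sum_le _ _
        _ ≤ ∑ k : Fin n, c (B k) * σ := by
            apply Finset.sum_le_sum
            intro k _
            rw [norm_smul, Real.norm_eq_abs, abs_of_nonneg (hc_nonneg _)]
            exact mul_le_mul_of_nonneg_left (hfb _ θ) (hc_nonneg _)
        _ = σ * ∑ k : Fin n, c (B k) := by rw [← Finset.sum_mul]; ring
    have hsum_c_nonneg : 0 ≤ ∑ k : Fin n, c (B k) :=
      Finset.sum_nonneg fun k _ => hc_nonneg _
    have hCS : (∑ k : Fin n, c (B k)) ^ 2 ≤ (n : ℝ) * ∑ k : Fin n, (c (B k)) ^ 2 := by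
      have := sq_sum_le_card_mul_sum_sq (s := Finset.univ) (f := fun k : Fin n => c (B k))
      simpa using this
    have hnormv2 : ‖v‖ ^ 2 ≤ (α / (n : ℝ)) ^ 2 * σ ^ 2 * (n : ℝ)
        * ∑ k : Fin n, (c (B k)) ^ 2 := by
      have h1 : ‖v‖ ^ 2 ≤ ((α / (n : ℝ)) * σ * (∑ k : Fin n, c (B k))) ^ 2 := by
        apply sq_le_sq' _ hnormv
        have : 0 ≤ (α / (n : ℝ)) * σ * (∑ k : Fin n, c (B k)) := by positivity
        linarith [norm_nonneg v]
      calc ‖v‖ ^ 2 ≤ ((α / (n : ℝ)) * σ * (∑ k : Fin n, c (B k))) ^ 2 := h1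
        _ = (α / (n : ℝ)) ^ 2 * σ ^ 2 * (∑ k : Fin n, c (B k)) ^ 2 := by ring
        _ ≤ (α / (n : ℝ)) ^ 2 * σ ^ 2 * ((n : ℝ) * ∑ k : Fin n, (c (B k)) ^ 2) := by
            apply mul_le_mul_of_nonneg_left hCS (by positivity)
        _ = _ := by ring
    have hkey : G θ + ⟪g, v⟫ + L / 2 * ‖v‖ ^ 2
        ≤ G θ - κ * ∑ k : Fin n, (c (B k)) ^ 2 := by
      rw [hinner, hκ]
      have h2 : L / 2 * ‖v‖ ^ 2
          ≤ L / 2 * ((α / (n : ℝ)) ^ 2 * σ ^ 2 * (n : ℝ) * ∑ k : Fin n, (c (B k)) ^ 2) :=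
        mul_le_mul_of_nonneg_left hnormv2 (by positivity)
      have h3 : L / 2 * ((α / (n : ℝ)) ^ 2 * σ ^ 2 * (n : ℝ) * ∑ k : Fin n, (c (B k)) ^ 2)
          = (α / (n : ℝ)) * (L * α * σ ^ 2 / 2) * ∑ k : Fin n, (c (B k)) ^ 2 := by
        field_simp
      rw [h3] at h2
      have h4 : (α / (n : ℝ)) * (1 - L * α * σ ^ 2 / 2) * ∑ k : Fin n, (c (B k)) ^ 2
          = (α / (n : ℝ)) * ∑ k : Fin n, (c (B k)) ^ 2
            - (α / (n : ℝ)) * (L * α * σ ^ 2 / 2) * ∑ k : Fin n, (c (B k)) ^ 2 := by ring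
      linarith
    exact le_trans hdesc hkey
  -- expectation bound
  obtain ⟨i₀, hi₀⟩ := hex
  have hexp : p * ‖g‖ ^ 4 ≤ ∑ B : Fin n → Fin N, μ B * ∑ k : Fin n, (c (B k)) ^ 2 := by
    have hg4 : ‖g‖ ^ 4 = (‖g‖ ^ 2) ^ 2 := by ring
    calc p * ‖g‖ ^ 4
        ≤ (∑ B ∈ Finset.univ.filter
            (fun B : Fin n → Fin N => ∃ k, B k = Fin.castLE hMN i₀), μ B) * ‖g‖ ^ 4 :=
          mul_le_mul_of_nonneg_right (hμp i₀) (by positivity)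
      _ = ∑ B ∈ Finset.univ.filter
            (fun B : Fin n → Fin N => ∃ k, B k = Fin.castLE hMN i₀), μ B * ‖g‖ ^ 4 :=
          Finset.sum_mul _ _ _
      _ ≤ ∑ B ∈ Finset.univ.filter
            (fun B : Fin n → Fin N => ∃ k, B k = Fin.castLE hMN i₀),
            μ B * ∑ k : Fin n, (c (B k)) ^ 2 := by
          apply Finset.sum_le_sum
          intro B hB
          obtain ⟨k₀, hk₀⟩ := (Finset.mem_filter.mp hB).2
          apply mul_le_mul_of_nonneg_left _ (hμ0 B)
          have h5 : ‖g‖ ^ 4 ≤ (c (B k₀)) ^ 2 := by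
            rw [hg4]
            apply sq_le_sq'
            · have := hc_nonneg (B k₀); nlinarith [sq_nonneg ‖g‖]
            · rw [hk₀]; exact le_trans hi₀ (le_max_left _ _)
          exact le_trans h5 (Finset.single_le_sum
            (fun k _ => sq_nonneg (c (B k))) (Finset.mem_univ k₀))
      _ ≤ ∑ B : Fin n → Fin N, μ B * ∑ k : Fin n, (c (B k)) ^ 2 := by
          apply Finset.sum_le_sum_of_subset_of_nonneg (Finset.filter_subset _ _)
          intro B _ _
          exact mul_nonneg (hμ0 B) (Finset.sum_nonneg fun k _ => sq_nonneg _)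
  calc ∑ B : Fin n → Fin N, μ B * G (U θ B α)
      ≤ ∑ B : Fin n → Fin N, μ B * (G θ - κ * ∑ k : Fin n, (c (B k)) ^ 2) :=
        Finset.sum_le_sum fun B _ => mul_le_mul_of_nonneg_left (hstep B) (hμ0 B)
    _ = G θ - κ * ∑ B : Fin n → Fin N, μ B * ∑ k : Fin n, (c (B k)) ^ 2 := by
        simp only [mul_sub]
        rw [Finset.sum_sub_distrib, ← Finset.sum_mul, hμ1, one_mul, Finset.mul_sum]
        congr 1
        refine Finset.sum_congr rfl fun B _ => ?_
        ring
    _ ≤ G θ - κ * (p * ‖g‖ ^ 4) := by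
        apply sub_le_sub_left
        exact mul_le_mul_of_nonneg_left hexp hκpos.le
    _ = G θ - κ * p * ‖g‖ ^ 4 := by ring
end
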